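/- Let M be a nonnegative real square matrix that is expanding, meaning that for all indices i,j the (i,j) entry of M^m tends to infinity in limsup as m → ∞. Then M has a simple eigenvalue equal to its spectral radius λ(M), and there is a strictly positive eigenvector associated to this eigenvalue. -/

import Mathlib

/-- A nonnegative real square matrix is *expanding* if every entry of `M^m` has
`limsup` equal to `∞` as `m → ∞`. -/
def Matrix.IsExpanding {n : ℕ} (M : Matrix (Fin n) (Fin n) ℝ) : Prop :=
  ∀ i j, Filter.limsup (fun m : ℕ => (((M ^ m) i j : ℝ) : EReal)) Filter.atTop = ⊤

/-- The spectral radius of a real square matrix: the maximum of the absolute values of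
its complex eigenvalues (roots of the characteristic polynomial over `ℂ`). -/
noncomputable def Matrix.spectralRadius {n : ℕ} (M : Matrix (Fin n) (Fin n) ℝ) : ℝ :=
  sSup {r : ℝ | ∃ μ : ℂ, ((M.map (Complex.ofReal)).charpoly).IsRoot μ ∧ r = ‖μ‖}

open Polynomial Matrix Filter


lemma pf_derivative_det {R : Type*} [CommRing R] :
    ∀ (m : ℕ) (A : Matrix (Fin m) (Fin m) R[X]),
    derivative (det A) = ∑ i, det (A.updateRow i (fun j => derivative (A i j))) := by
  intro m
  induction m with
  | zero => intro A; simp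
  | succ m IH =>
    intro A
    rw [det_succ_row_zero, map_sum]
    have key : ∀ j : Fin (m+1),
        derivative ((-1 : R[X]) ^ (j : ℕ) * A 0 j * det (A.submatrix Fin.succ j.succAbove))
        = (-1) ^ (j:ℕ) * (derivative (A 0 j)) * det (A.submatrix Fin.succ j.succAbove)
          + ∑ i : Fin m, (-1) ^ (j:ℕ) * A 0 j *
            det ((A.submatrix Fin.succ j.succAbove).updateRow i
              (fun l => derivative (A.submatrix Fin.succ j.succAbove i l))) := by
      intro j
      rw [derivative_mul, derivative_mul, IH, Finset.mul_sum]
      have h0 : derivative ((-1:R[X]) ^ (j:ℕ)) = 0 := by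
        simp [derivative_pow]
      rw [h0]
      ring
    rw [Finset.sum_congr rfl (fun j _ => key j), Finset.sum_add_distrib]
    rw [Fin.sum_univ_succ (f := fun i => det (A.updateRow i (fun j => derivative (A i j))))]
    congr 1
    · -- row 0 term
      rw [det_succ_row_zero (A.updateRow 0 (fun j => derivative (A 0 j)))]
      refine Finset.sum_congr rfl fun j _ => ?_
      have hmat : (A.updateRow 0 (fun j => derivative (A 0 j))).submatrix Fin.succ j.succAbove
          = A.submatrix Fin.succ j.succAbove := by
        ext r c
        simp [Matrix.updateRow_ne (Fin.succ_ne_zero r)]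
      rw [updateRow_self, hmat]
    · -- other rows, swap sums
      rw [Finset.sum_comm]
      refine Finset.sum_congr rfl fun i _ => ?_
      rw [det_succ_row_zero (A.updateRow i.succ (fun j => derivative (A i.succ j)))]
      refine Finset.sum_congr rfl fun j _ => ?_
      rw [Matrix.updateRow_ne (Fin.succ_ne_zero i).symm]
      have hmat : (A.updateRow i.succ (fun l => derivative (A i.succ l))).submatrix
            Fin.succ j.succAbove
          = (A.submatrix Fin.succ j.succAbove).updateRow i
              (fun l => derivative (A.submatrix Fin.succ j.succAbove i l)) := by
        ext r c
        by_cases h : r = i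
        · subst h
          simp
        · have h2 : r.succ ≠ i.succ := fun hc => h (Fin.succ_injective _ hc)
          simp [Matrix.updateRow_ne h2, Matrix.updateRow_ne h]
      rw [hmat]

lemma pf_charpoly_eval {m : ℕ} {R : Type*} [CommRing R] (M : Matrix (Fin m) (Fin m) R) (r : R) :
    M.charpoly.eval r = det (r • (1 : Matrix (Fin m) (Fin m) R) - M) := by
  have : M.charpoly.eval r = (evalRingHom r) (det (charmatrix M)) := rfl
  rw [this, RingHom.map_det]
  congr 1
  ext i j
  by_cases h : i = j
  · subst h
    simp [charmatrix_apply_eq, Matrix.one_apply]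
  · simp [charmatrix_apply_ne _ _ _ h, Matrix.one_apply_ne h]

lemma pf_derivative_charpoly {R : Type*} [CommRing R] {k : ℕ} (M : Matrix (Fin (k+1)) (Fin (k+1)) R) :
    derivative M.charpoly
      = ∑ i : Fin (k+1), (M.submatrix i.succAbove i.succAbove).charpoly := by
  rw [Matrix.charpoly, pf_derivative_det]
  refine Finset.sum_congr rfl fun i _ => ?_
  have hrow : (fun j => derivative (charmatrix M i j)) = Pi.single i (1 : R[X]) := by
    ext j
    by_cases h : j = i
    · subst h; simp [charmatrix_apply_eq]
    · simp [charmatrix_apply_ne _ _ _ (Ne.symm h), Pi.single_eq_of_ne h]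
  rw [hrow, det_succ_row _ i, Finset.sum_eq_single i]
  · have hsub : ((charmatrix M).updateRow i (Pi.single i 1)).submatrix i.succAbove i.succAbove
        = charmatrix (M.submatrix i.succAbove i.succAbove) := by
      ext r c
      have h1 : i.succAbove r ≠ i := Fin.succAbove_ne i r
      by_cases h : r = c
      · subst h
        simp [Matrix.updateRow_ne h1, charmatrix_apply_eq]
      · have h2 : i.succAbove r ≠ i.succAbove c :=
          fun hc => h (Fin.succAbove_right_injective hc)
        simp [Matrix.updateRow_ne h1, charmatrix_apply_ne _ _ _ h2,
          charmatrix_apply_ne _ _ _ h]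
    rw [hsub, updateRow_self, Pi.single_eq_same, Matrix.charpoly]

    rw [Even.neg_one_pow ⟨(i:ℕ), rfl⟩, one_mul, one_mul]
  · intro j _ hji
    rw [updateRow_self, Pi.single_eq_of_ne hji]
    ring
  · intro h; exact absurd (Finset.mem_univ i) h

variable {n : ℕ}

section Entrywise
variable {A B C D : Matrix (Fin n) (Fin n) ℝ}

lemma pf_mul_nonneg (hA : ∀ i j, 0 ≤ A i j) (hB : ∀ i j, 0 ≤ B i j) :
    ∀ i j, 0 ≤ (A * B) i j := by
  intro i j
  rw [Matrix.mul_apply]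
  exact Finset.sum_nonneg fun k _ => mul_nonneg (hA i k) (hB k j)

lemma pf_pow_nonneg (hA : ∀ i j, 0 ≤ A i j) : ∀ (m : ℕ) i j, 0 ≤ (A ^ m) i j := by
  intro m
  induction m with
  | zero => intro i j; rw [pow_zero]; by_cases h : i = j <;> simp [Matrix.one_apply, h]
  | succ m IH =>
    rw [pow_succ]
    exact pf_mul_nonneg IH hA

lemma pf_mul_mono (hA : ∀ i j, A i j ≤ B i j) (hC : ∀ i j, C i j ≤ D i j)
    (hB : ∀ i j, 0 ≤ A i j) (hD : ∀ i j, 0 ≤ C i j) :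
    ∀ i j, (A * C) i j ≤ (B * D) i j := by
  intro i j
  rw [Matrix.mul_apply, Matrix.mul_apply]
  refine Finset.sum_le_sum fun k _ => ?_
  exact mul_le_mul (hA i k) (hC k j) (hD k j) (le_trans (hB i k) (hA i k))

end Entrywise

/-- Expanding implies each entry of some positive power is positive. -/
lemma pf_irr (M : Matrix (Fin n) (Fin n) ℝ) (hpos : ∀ i j, 0 ≤ M i j)
    (hexp : M.IsExpanding) : ∀ i j, ∃ m, 1 ≤ m ∧ 0 < (M ^ m) i j := by
  intro i j
  by_contra hcon
  push_neg at hcon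
  have hzero : ∀ m, 1 ≤ m → (M ^ m) i j = 0 := fun m hm =>
    le_antisymm (hcon m hm) (pf_pow_nonneg hpos m i j)
  have hev : (fun m : ℕ => (((M ^ m) i j : ℝ) : EReal)) =ᶠ[atTop] (fun _ => (0:EReal)) := by
    filter_upwards [eventually_ge_atTop 1] with m hm
    rw [hzero m hm]; norm_num
  have := hexp i j
  rw [limsup_congr hev] at this
  simp at this

lemma pf_onePlus_nonneg (M : Matrix (Fin n) (Fin n) ℝ) (hpos : ∀ i j, 0 ≤ M i j) :
    ∀ i j, 0 ≤ (1 + M) i j := by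
  intro i j
  have : (0:ℝ) ≤ (1 : Matrix (Fin n) (Fin n) ℝ) i j := by
    by_cases h : i = j <;> simp [Matrix.one_apply, h]
  simpa using add_nonneg this (hpos i j)

lemma pf_onePlus_pow_le (M : Matrix (Fin n) (Fin n) ℝ) (hpos : ∀ i j, 0 ≤ M i j) :
    ∀ m i j, (M ^ m) i j ≤ ((1 + M) ^ m) i j := by
  intro m
  induction m with
  | zero => simp
  | succ m IH =>
    rw [pow_succ, pow_succ]
    refine pf_mul_mono IH ?_ (pf_pow_nonneg hpos m) hpos
    intro i j
    have : (0:ℝ) ≤ (1 : Matrix (Fin n) (Fin n) ℝ) i j := by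
      by_cases h : i = j <;> simp [Matrix.one_apply, h]
    simpa [Matrix.add_apply] using le_add_of_nonneg_left (a := M i j) this

lemma pf_onePlus_pow_succ (M : Matrix (Fin n) (Fin n) ℝ) (hpos : ∀ i j, 0 ≤ M i j)
    (m : ℕ) (i j : Fin n) : ((1 + M) ^ m) i j ≤ ((1 + M) ^ (m+1)) i j := by
  rw [pow_succ, Matrix.mul_add, Matrix.mul_one]
  have := pf_mul_nonneg (pf_pow_nonneg (pf_onePlus_nonneg M hpos) m) hpos i j
  simpa [Matrix.add_apply] using le_add_of_nonneg_right (a := ((1 + M) ^ m) i j) this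

lemma pf_onePlus_pow_mono (M : Matrix (Fin n) (Fin n) ℝ) (hpos : ∀ i j, 0 ≤ M i j)
    (m₁ m₂ : ℕ) (h : m₁ ≤ m₂) (i j : Fin n) :
    ((1 + M) ^ m₁) i j ≤ ((1 + M) ^ m₂) i j := by
  induction h with
  | refl => exact le_rfl
  | step h IH => exact le_trans IH (pf_onePlus_pow_succ M hpos _ i j)

/-- A power of `1 + M` with all entries positive. -/
lemma pf_exists_B (M : Matrix (Fin n) (Fin n) ℝ) (hpos : ∀ i j, 0 ≤ M i j)
    (hexp : M.IsExpanding) :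
    ∃ N : ℕ, ∀ i j, 0 < ((1 + M) ^ N) i j := by
  choose f hf1 hf2 using pf_irr M hpos hexp
  refine ⟨Finset.univ.sup (fun p : Fin n × Fin n => f p.1 p.2), fun i j => ?_⟩
  have h1 : f i j ≤ Finset.univ.sup (fun p : Fin n × Fin n => f p.1 p.2) :=
    Finset.le_sup (f := fun p : Fin n × Fin n => f p.1 p.2) (Finset.mem_univ (i, j))
  calc (0:ℝ) < (M ^ f i j) i j := hf2 i j
    _ ≤ ((1 + M) ^ f i j) i j := pf_onePlus_pow_le M hpos _ i j
    _ ≤ _ := pf_onePlus_pow_mono M hpos _ _ h1 i j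

section MV
variable {A : Matrix (Fin n) (Fin n) ℝ} {x : Fin n → ℝ}

lemma pf_mv_apply' {m : ℕ} {R : Type*} [CommRing R] (A : Matrix (Fin m) (Fin m) R)
    (x : Fin m → R) (i : Fin m) : A.mulVec x i = ∑ j, A i j * x j := rfl

lemma pf_mv_apply (A : Matrix (Fin n) (Fin n) ℝ) (x : Fin n → ℝ) (i : Fin n) :
    A.mulVec x i = ∑ j, A i j * x j := rfl

lemma pf_mv_nonneg (hA : ∀ i j, 0 ≤ A i j) (hx : ∀ i, 0 ≤ x i) (i : Fin n) :
    0 ≤ A.mulVec x i := by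
  rw [pf_mv_apply]
  exact Finset.sum_nonneg fun j _ => mul_nonneg (hA i j) (hx j)

lemma pf_exists_pos (hx : ∀ i, 0 ≤ x i) (hx0 : x ≠ 0) : ∃ j, 0 < x j := by
  by_contra hcon
  push_neg at hcon
  exact hx0 (funext fun j => le_antisymm (hcon j) (hx j))

lemma pf_mv_pos (hA : ∀ i j, 0 < A i j) (hx : ∀ i, 0 ≤ x i) (hx0 : x ≠ 0) (i : Fin n) :
    0 < A.mulVec x i := by
  obtain ⟨j, hj⟩ := pf_exists_pos hx hx0
  have h1 : A i j * x j ≤ ∑ k, A i k * x k :=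
    Finset.single_le_sum (fun k _ => mul_nonneg (le_of_lt (hA i k)) (hx k))
      (Finset.mem_univ j)
  rw [pf_mv_apply]
  exact lt_of_lt_of_le (mul_pos (hA i j) hj) h1

lemma pf_cont_mv (A : Matrix (Fin n) (Fin n) ℝ) (i : Fin n) :
    Continuous fun x : Fin n → ℝ => A.mulVec x i := by
  have : (fun x : Fin n → ℝ => A.mulVec x i) = fun x => ∑ j, A i j * x j :=
    funext fun x => pf_mv_apply A x i
  rw [this]
  exact continuous_finset_sum _ fun j _ => continuous_const.mul (continuous_apply j)

end MV

/-- The main Collatz–Wielandt package. -/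
lemma pf_main (hn : 0 < n) (M : Matrix (Fin n) (Fin n) ℝ) (hpos : ∀ i j, 0 ≤ M i j)
    (hexp : M.IsExpanding) :
    ∃ lam : ℝ, 0 < lam ∧
      (∃ y : Fin n → ℝ, (∀ i, 0 < y i) ∧ M.mulVec y = lam • y) ∧
      (∀ (x : Fin n → ℝ) (t : ℝ), (∀ i, 0 ≤ x i) → x ≠ 0 →
        (∀ i, t * x i ≤ M.mulVec x i) → t ≤ lam) ∧
      (∀ x : Fin n → ℝ, (∀ i, 0 ≤ x i) → x ≠ 0 →
        (∀ i, lam * x i ≤ M.mulVec x i) → (∀ i, 0 < x i)) := by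
  haveI : NeZero n := ⟨hn.ne'⟩
  obtain ⟨N, hB⟩ := pf_exists_B M hpos hexp
  set B : Matrix (Fin n) (Fin n) ℝ := (1 + M) ^ N with hBdef
  have hBnn : ∀ i j, 0 ≤ B i j := fun i j => le_of_lt (hB i j)
  have hcomm : M * B = B * M := by
    exact (((Commute.one_right M).add_right (Commute.refl M)).pow_right N).eq
  -- the simplex
  set S : Set (Fin n → ℝ) := {x | (∀ i, 0 ≤ x i) ∧ ∑ i, x i = 1} with hSdef
  have hSne : S.Nonempty := by
    refine ⟨fun _ => (n : ℝ)⁻¹, fun i => by positivity, ?_⟩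
    have hn' : (n : ℝ) ≠ 0 := Nat.cast_ne_zero.mpr hn.ne'
    simp [Finset.sum_const, Finset.card_univ, nsmul_eq_mul, mul_inv_cancel₀ hn']
  have hSx0 : ∀ x ∈ S, x ≠ 0 := by
    rintro x ⟨hx1, hx2⟩ rfl
    simp at hx2
  have hScompact : IsCompact S := by
    have hclosed : IsClosed S := by
      have h1 : IsClosed {x : Fin n → ℝ | ∀ i, 0 ≤ x i} := by
        have : {x : Fin n → ℝ | ∀ i, 0 ≤ x i} = ⋂ i, {x | 0 ≤ x i} := by
          ext x; simp
        rw [this]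
        exact isClosed_iInter fun i => isClosed_le continuous_const (continuous_apply i)
      have h2 : IsClosed {x : Fin n → ℝ | ∑ i, x i = 1} :=
        isClosed_eq (continuous_finset_sum _ fun i _ => continuous_apply i) continuous_const
      exact (h1.inter h2)
    refine IsCompact.of_isClosed_subset (isCompact_univ_pi fun _ : Fin n => isCompact_Icc
      (a := (0:ℝ)) (b := 1)) hclosed ?_
    rintro x ⟨hx1, hx2⟩ i -
    refine ⟨hx1 i, ?_⟩
    rw [← hx2]
    exact Finset.single_le_sum (fun j _ => hx1 j) (Finset.mem_univ i)
  -- the function h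
  have hne : (Finset.univ : Finset (Fin n)).Nonempty := Finset.univ_nonempty
  set h : (Fin n → ℝ) → ℝ := fun x =>
    Finset.univ.inf' hne (fun i => M.mulVec (B.mulVec x) i / B.mulVec x i) with hhdef
  have hBxpos : ∀ x ∈ S, ∀ i, 0 < B.mulVec x i := fun x hx i =>
    pf_mv_pos hB hx.1 (hSx0 x hx) i
  have hcont : ContinuousOn h S := by
    intro x hx
    apply ContinuousWithinAt.finset_inf'_apply hne
    intro i _
    have e1 : (fun x : Fin n → ℝ => M.mulVec (B.mulVec x) i)
        = fun x => (M * B).mulVec x i := funext fun x => by rw [mulVec_mulVec]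
    refine ContinuousWithinAt.div ?_ ((pf_cont_mv B i).continuousWithinAt) (hBxpos x hx i).ne'
    rw [e1]
    exact (pf_cont_mv (M * B) i).continuousWithinAt
  obtain ⟨xs, hxsS, hmax⟩ := hScompact.exists_isMaxOn hSne hcont
  set lam : ℝ := h xs with hlam
  -- Collatz–Wielandt upper bound
  have hCW : ∀ (x : Fin n → ℝ) (t : ℝ), (∀ i, 0 ≤ x i) → x ≠ 0 →
      (∀ i, t * x i ≤ M.mulVec x i) → t ≤ lam := by
    intro x t hx hx0 ht
    -- first, t * (B x) ≤ M (B x)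
    have key : ∀ i, t * B.mulVec x i ≤ M.mulVec (B.mulVec x) i := by
      intro i
      have hz : ∀ j, 0 ≤ (M.mulVec x - t • x) j := fun j => by
        simpa using sub_nonneg.mpr (ht j)
      have h1 : 0 ≤ B.mulVec (M.mulVec x - t • x) i := pf_mv_nonneg hBnn hz i
      rw [Matrix.mulVec_sub, Matrix.mulVec_smul] at h1
      have h2 : B.mulVec (M.mulVec x) = M.mulVec (B.mulVec x) := by
        rw [mulVec_mulVec, mulVec_mulVec, hcomm]
      rw [h2] at h1
      have := sub_nonneg.mp h1
      simpa [smul_eq_mul] using this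
    -- normalize x into S
    obtain ⟨j0, hj0⟩ := pf_exists_pos hx hx0
    have hsum : 0 < ∑ i, x i :=
      lt_of_lt_of_le hj0 (Finset.single_le_sum (fun i _ => hx i) (Finset.mem_univ j0))
    set c : ℝ := (∑ i, x i)⁻¹ with hc
    have hcpos : 0 < c := inv_pos.mpr hsum
    set x' : Fin n → ℝ := c • x with hx'
    have hx'S : x' ∈ S := by
      constructor
      · intro i; exact mul_nonneg hcpos.le (hx i)
      · simp only [hx', Pi.smul_apply, smul_eq_mul, ← Finset.mul_sum]
        exact inv_mul_cancel₀ hsum.ne'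
    have hBx' : B.mulVec x' = c • B.mulVec x := by rw [hx', Matrix.mulVec_smul]
    have hle : t ≤ h x' := by
      rw [hhdef]
      refine Finset.le_inf' hne _ fun i _ => ?_
      rw [le_div_iff₀ (hBxpos x' hx'S i)]
      rw [hBx', Matrix.mulVec_smul]
      simp only [Pi.smul_apply, smul_eq_mul]
      calc t * (c * B.mulVec x i) = c * (t * B.mulVec x i) := by ring
        _ ≤ c * M.mulVec (B.mulVec x) i := by
            exact mul_le_mul_of_nonneg_left (key i) hcpos.le
    exact le_trans hle (hmax hx'S)
  have hlam0 : 0 ≤ lam := by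
    obtain ⟨x0, hx0S⟩ := hSne
    refine hCW x0 0 hx0S.1 (hSx0 x0 hx0S) fun i => ?_
    simpa using pf_mv_nonneg hpos hx0S.1 i
  -- strict lemma
  have hstrict : ∀ x : Fin n → ℝ, (∀ i, 0 ≤ x i) → x ≠ 0 →
      (∀ i, lam * x i ≤ M.mulVec x i) →
      M.mulVec x = lam • x ∧ (∀ i, 0 < x i) := by
    intro x hx hx0 hlx
    have heq : M.mulVec x = lam • x := by
      by_contra hne'
      set z : Fin n → ℝ := M.mulVec x - lam • x with hzdef
      have hz0 : z ≠ 0 := fun hc => hne' (by rwa [hzdef, sub_eq_zero] at hc)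
      have hznn : ∀ i, 0 ≤ z i := fun i => by
        simpa [hzdef] using sub_nonneg.mpr (hlx i)
      set w : Fin n → ℝ := B.mulVec x with hwdef
      have hwpos : ∀ i, 0 < w i := fun i => pf_mv_pos hB hx hx0 i
      have hw0 : w ≠ 0 := fun hc => (hwpos ⟨0, hn⟩).ne' (by rw [hc]; rfl)
      have hBz : ∀ i, 0 < B.mulVec z i := fun i => pf_mv_pos hB hznn hz0 i
      have hgap : ∀ i, lam * w i < M.mulVec w i := by
        intro i
        have h2 : B.mulVec (M.mulVec x) = M.mulVec (B.mulVec x) := by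
          rw [mulVec_mulVec, mulVec_mulVec, hcomm]
        have h3 := hBz i
        rw [hzdef, Matrix.mulVec_sub, Matrix.mulVec_smul, h2] at h3
        simp only [Pi.sub_apply, Pi.smul_apply, smul_eq_mul, sub_pos] at h3
        calc lam * w i < M.mulVec (B.mulVec x) i := h3
          _ = M.mulVec w i := rfl
      set t' : ℝ := Finset.univ.inf' hne (fun i => M.mulVec w i / w i) with ht'
      have ht'gt : lam < t' := by
        rw [ht', Finset.lt_inf'_iff]
        intro i _
        rw [lt_div_iff₀ (hwpos i)]
        calc lam * w i < M.mulVec w i := hgap i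
          _ = M.mulVec w i := rfl
      have ht'le : t' ≤ lam := by
        refine hCW w t' (fun i => (hwpos i).le) hw0 fun i => ?_
        rw [← le_div_iff₀ (hwpos i)]
        exact Finset.inf'_le _ (Finset.mem_univ i)
      exact absurd ht'le (not_le.mpr ht'gt)
    refine ⟨heq, ?_⟩
    -- positivity via B x = (1+lam)^N x
    have hpow : ∀ m : ℕ, ((1 + M) ^ m).mulVec x = ((1 + lam) ^ m) • x := by
      intro m
      induction m with
      | zero => simp
      | succ m IH =>
        rw [pow_succ, ← mulVec_mulVec]
        have h1 : (1 + M).mulVec x = (1 + lam) • x := by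
          rw [Matrix.add_mulVec, Matrix.one_mulVec, heq]
          ext i
          simp [smul_eq_mul]
          ring
        rw [h1, Matrix.mulVec_smul, IH, smul_smul, pow_succ]
        congr 1
        ring
    intro i
    have h1 : 0 < B.mulVec x i := pf_mv_pos hB hx hx0 i
    rw [hBdef, hpow N] at h1
    have h2 : 0 < (1 + lam) ^ N := pow_pos (by linarith) N
    have := h1
    simp only [Pi.smul_apply, smul_eq_mul] at this
    nlinarith
  -- the eigenvector
  set y : Fin n → ℝ := B.mulVec xs with hy
  have hypos : ∀ i, 0 < y i := hBxpos xs hxsS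
  have hy0 : y ≠ 0 := fun hc => (hypos ⟨0, hn⟩).ne' (by rw [hc]; rfl)
  have hylam : ∀ i, lam * y i ≤ M.mulVec y i := by
    intro i
    rw [← le_div_iff₀ (hypos i)]
    exact Finset.inf'_le _ (Finset.mem_univ i)
  obtain ⟨heig, -⟩ := hstrict y (fun i => (hypos i).le) hy0 hylam
  -- lam > 0
  have hlampos : 0 < lam := by
    set i0 : Fin n := ⟨0, hn⟩ with hi0
    obtain ⟨m, hm1, hm2⟩ := pf_irr M hpos hexp i0 i0
    obtain ⟨m', rfl⟩ : ∃ m', m = m' + 1 := ⟨m - 1, by omega⟩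
    have hMrow : ∃ k, 0 < M i0 k := by
      by_contra hcon
      push_neg at hcon
      have : (M ^ (m' + 1)) i0 i0 = 0 := by
        rw [pow_succ']
        rw [Matrix.mul_apply]
        refine Finset.sum_eq_zero fun k _ => ?_
        have h1 : M i0 k = 0 := le_antisymm (hcon k) (hpos i0 k)
        rw [h1, zero_mul]
      rw [this] at hm2
      exact lt_irrefl 0 hm2
    obtain ⟨k, hk⟩ := hMrow
    have h1 : M i0 k * y k ≤ M.mulVec y i0 := by
      rw [pf_mv_apply]
      exact Finset.single_le_sum
        (fun l _ => mul_nonneg (hpos i0 l) (hypos l).le) (Finset.mem_univ k)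
    have h2 : 0 < M.mulVec y i0 := lt_of_lt_of_le (mul_pos hk (hypos k)) h1
    rw [heig] at h2
    simp only [Pi.smul_apply, smul_eq_mul] at h2
    by_contra hcon
    push_neg at hcon
    nlinarith [hypos i0]
  exact ⟨lam, hlampos, ⟨y, hypos, heig⟩, hCW, fun x hx hx0 hlx => (hstrict x hx hx0 hlx).2⟩

/-- roots of charpoly over a field are eigenvalues -/
lemma pf_charpoly_root_iff {K : Type*} [Field K] {m : ℕ} (A : Matrix (Fin m) (Fin m) K)
    (μ : K) : A.charpoly.IsRoot μ ↔ ∃ v, v ≠ 0 ∧ A.mulVec v = μ • v := by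
  rw [Polynomial.IsRoot, pf_charpoly_eval, ← Matrix.exists_mulVec_eq_zero_iff]
  constructor
  · rintro ⟨v, hv0, hv⟩
    refine ⟨v, hv0, ?_⟩
    rw [Matrix.sub_mulVec, Matrix.smul_mulVec, Matrix.one_mulVec, sub_eq_zero] at hv
    exact hv.symm
  · rintro ⟨v, hv0, hv⟩
    refine ⟨v, hv0, ?_⟩
    rw [Matrix.sub_mulVec, Matrix.smul_mulVec, Matrix.one_mulVec, hv, sub_self]

/-- absolute value vector inequality -/
lemma pf_abs_vec {m : ℕ} (A : Matrix (Fin m) (Fin m) ℝ) (hA : ∀ i j, 0 ≤ A i j)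
    (μ : ℂ) (v : Fin m → ℂ) (hv : (A.map Complex.ofReal).mulVec v = μ • v) (i : Fin m) :
    ‖μ‖ * ‖v i‖ ≤ A.mulVec (fun j => ‖v j‖) i := by
  have h1 : (A.map Complex.ofReal).mulVec v i = μ * v i := by
    rw [hv]; rfl
  rw [pf_mv_apply'] at h1
  have h2 : ‖μ‖ * ‖v i‖ = ‖∑ j, (A i j : ℂ) * v j‖ := by
    rw [← norm_mul, ← h1]; rfl
  rw [h2, pf_mv_apply']
  refine le_trans (norm_sum_le _ _) (le_of_eq ?_)
  refine Finset.sum_congr rfl fun j _ => ?_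
  rw [norm_mul, Complex.norm_real, Real.norm_eq_abs, abs_of_nonneg (hA i j)]

theorem expanding_matrix_perron_frobenius (n : ℕ) (hn : 0 < n)
    (M : Matrix (Fin n) (Fin n) ℝ) (hpos : ∀ i j, 0 ≤ M i j)
    (hexp : M.IsExpanding) :
    M.charpoly.IsRoot M.spectralRadius ∧
    M.charpoly.rootMultiplicity M.spectralRadius = 1 ∧
    ∃ v : Fin n → ℝ, (∀ i, 0 < v i) ∧ M.mulVec v = M.spectralRadius • v := by
  obtain ⟨k, rfl⟩ : ∃ k, n = k + 1 := ⟨n - 1, by omega⟩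
  obtain ⟨lam, hlampos, ⟨y, hypos, heig⟩, hCW, hstrict⟩ := pf_main hn M hpos hexp
  have hy0 : y ≠ 0 := by
    intro hc
    exact (hypos 0).ne' (by rw [hc]; rfl)
  have hroot : M.charpoly.IsRoot lam := (pf_charpoly_root_iff M lam).mpr ⟨y, hy0, heig⟩
  -- map commutation
  have hmapeq : M.map Complex.ofReal = M.map (Complex.ofRealHom : ℝ →+* ℂ) := rfl
  -- complex eigenvalue bound
  have hcomplex : ∀ μ : ℂ, ((M.map Complex.ofReal).charpoly).IsRoot μ →
      ‖μ‖ ≤ lam := by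
    intro μ hμ
    obtain ⟨v, hv0, hv⟩ := (pf_charpoly_root_iff (M.map Complex.ofReal) μ).mp hμ
    obtain ⟨j, hj⟩ := Function.ne_iff.mp hv0
    set x : Fin (k+1) → ℝ := fun j => ‖v j‖ with hx
    have hxnn : ∀ i, 0 ≤ x i := fun i => norm_nonneg _
    have hx0 : x ≠ 0 := by
      intro hc
      apply hj
      have : x j = 0 := by rw [hc]; rfl
      exact norm_eq_zero.mp this
    exact hCW x (‖μ‖) hxnn hx0 (fun i => pf_abs_vec M hpos μ v hv i)
  -- spectral radius equals lam
  have hsr : M.spectralRadius = lam := by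
    have hmem : lam ∈ {r : ℝ | ∃ μ : ℂ,
        ((M.map Complex.ofReal).charpoly).IsRoot μ ∧ r = ‖μ‖} := by
      refine ⟨(lam : ℂ), ?_, by rw [Complex.norm_real, Real.norm_eq_abs, abs_of_pos hlampos]⟩
      rw [hmapeq, Matrix.charpoly_map]
      exact hroot.map
    refine le_antisymm (csSup_le ⟨lam, hmem⟩ ?_) (le_csSup ⟨lam, ?_⟩ hmem)
    · rintro r ⟨μ, hμ, rfl⟩
      exact hcomplex μ hμ
    · rintro r ⟨μ, hμ, rfl⟩
      exact hcomplex μ hμ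
  -- minors have strictly smaller spectral radius
  have hminor : ∀ (i : Fin (k+1)) (μ : ℂ),
      (((M.submatrix i.succAbove i.succAbove).map Complex.ofReal).charpoly).IsRoot μ →
      ‖μ‖ < lam := by
    intro i μ hμ
    set A : Matrix (Fin k) (Fin k) ℝ := M.submatrix i.succAbove i.succAbove with hA
    have hAnn : ∀ a b, 0 ≤ A a b := fun a b => hpos _ _
    obtain ⟨v, hv0, hv⟩ := (pf_charpoly_root_iff (A.map Complex.ofReal) μ).mp hμ
    obtain ⟨j, hj⟩ := Function.ne_iff.mp hv0
    set x : Fin k → ℝ := fun j => ‖v j‖ with hx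
    have habs := pf_abs_vec A hAnn μ v hv
    set xt : Fin (k+1) → ℝ := i.insertNth 0 x with hxt
    have hxtnn : ∀ l, 0 ≤ xt l := by
      intro l
      induction l using Fin.succAboveCases (i := i) with
      | x => simp [hxt]
      | p j => simp only [hxt, Fin.insertNth_apply_succAbove]; exact norm_nonneg _
    have hxt0 : xt ≠ 0 := by
      intro hc
      apply hj
      have : xt (i.succAbove j) = 0 := by rw [hc]; rfl
      rw [hxt, Fin.insertNth_apply_succAbove] at this
      exact norm_eq_zero.mp this
    have hineq : ∀ l, ‖μ‖ * xt l ≤ M.mulVec xt l := by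
      intro l
      induction l using Fin.succAboveCases (i := i) with
      | x =>
        rw [hxt, Fin.insertNth_apply_same, mul_zero]
        exact pf_mv_nonneg hpos hxtnn i
      | p j' =>
        rw [hxt, Fin.insertNth_apply_succAbove]
        refine le_trans (habs j') (le_of_eq ?_)
        rw [pf_mv_apply, pf_mv_apply]
        rw [Fin.sum_univ_succAbove (fun t => M (i.succAbove j') t * xt t) i]
        rw [hxt, Fin.insertNth_apply_same, mul_zero, zero_add]
        refine Finset.sum_congr rfl fun t _ => ?_
        rw [Fin.insertNth_apply_succAbove]
        rfl
    have hle : ‖μ‖ ≤ lam := hCW xt (‖μ‖) hxtnn hxt0 hineq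
    rcases lt_or_eq_of_le hle with h | h
    · exact h
    · exfalso
      have := hstrict xt hxtnn hxt0 (fun l => h ▸ hineq l)
      have hzero : xt i = 0 := by rw [hxt, Fin.insertNth_apply_same]
      exact (this i).ne' hzero
  -- each minor charpoly is positive at lam
  have hminorpos : ∀ i : Fin (k+1),
      0 < ((M.submatrix i.succAbove i.succAbove).charpoly).eval lam := by
    intro i
    set A : Matrix (Fin k) (Fin k) ℝ := M.submatrix i.succAbove i.succAbove with hA
    set q : ℝ[X] := A.charpoly with hq
    have hqmonic : q.Monic := A.charpoly_monic
    have hnoroot : ∀ r : ℝ, lam ≤ r → ¬ q.IsRoot r := by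
      intro r hr hcr
      have h1 : ((A.map Complex.ofReal).charpoly).IsRoot (r : ℂ) := by
        have : A.map Complex.ofReal = A.map (Complex.ofRealHom : ℝ →+* ℂ) := rfl
        rw [this, Matrix.charpoly_map]
        exact hcr.map
      have h2 := hminor i (r : ℂ) h1
      rw [Complex.norm_real, Real.norm_eq_abs, abs_of_nonneg (le_trans hlampos.le hr)] at h2
      exact absurd hr (not_le.mpr h2)
    rcases Nat.eq_zero_or_pos k with hk | hk
    · subst hk
      have h1 : q.natDegree = 0 := by
        rw [hq, Matrix.charpoly_natDegree_eq_dim]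
        simp
      rw [(hqmonic.natDegree_eq_zero).mp h1]
      simp
    · have hdeg : 0 < q.degree := by
        rw [hq, Matrix.charpoly_degree_eq_dim]
        simpa using hk
      have htend : Tendsto (fun t => q.eval t) atTop atTop :=
        Polynomial.tendsto_atTop_of_leadingCoeff_nonneg q hdeg
          (by rw [hqmonic.leadingCoeff]; norm_num)
      obtain ⟨T, hT1, hT2⟩ :=
        ((htend.eventually_gt_atTop 0).and (eventually_gt_atTop lam)).exists
      by_contra hle
      push_neg at hle
      rcases eq_or_lt_of_le hle with h | h
      · exact hnoroot lam le_rfl h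
      · have hIcc : ContinuousOn (fun t => q.eval t) (Set.Icc lam T) :=
          (Polynomial.continuous q).continuousOn
        have h0 : (0:ℝ) ∈ Set.Ioo (q.eval lam) (q.eval T) := ⟨h, hT1⟩
        obtain ⟨c, hcO, hc⟩ := intermediate_value_Ioo hT2.le hIcc h0
        exact hnoroot c hcO.1.le hc
  -- simplicity
  have hmult : M.charpoly.rootMultiplicity lam = 1 := by
    have hp0 : M.charpoly ≠ 0 := (Matrix.charpoly_monic M).ne_zero
    have hge : 1 ≤ M.charpoly.rootMultiplicity lam :=
      (Polynomial.rootMultiplicity_pos hp0).mpr hroot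
    have hderiv : 0 < (derivative M.charpoly).eval lam := by
      rw [pf_derivative_charpoly M, eval_finset_sum]
      exact Finset.sum_pos (fun i _ => hminorpos i) Finset.univ_nonempty
    by_contra hne'
    have h2 : 2 ≤ M.charpoly.rootMultiplicity lam := by omega
    have hdvd : (X - C lam) ^ 2 ∣ M.charpoly :=
      dvd_trans (pow_dvd_pow _ h2) (Polynomial.pow_rootMultiplicity_dvd _ lam)
    obtain ⟨g, hg⟩ := hdvd
    have : (derivative M.charpoly).eval lam = 0 := by
      rw [hg, derivative_mul, derivative_pow]
      simp
    rw [this] at hderiv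
    exact lt_irrefl 0 hderiv
  rw [hsr]
  exact ⟨hroot, hmult, y, hypos, heig⟩
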